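/- Let M be the 4×4 matrix with rows (5,5,5,4), (2,1,1,2), (0,1,0,0), (0,0,1,0), and let M̃ be the matrix obtained by dividing the last row by 2 (rows (5,5,5,4), (2,1,1,2), (0,1,0,0), (0,0,1/2,0)). Then the characteristic polynomial of M̃ has a real root strictly between 6.97 and 6.99. -/

import Mathlib

open Polynomial

set_option maxHeartbeats 2000000 in
lemma charpoly_eq :
    Matrix.charpoly (!![5, 5, 5, 4; 2, 1, 1, 2; 0, 1, 0, 0; 0, 0, 1/2, 0] :
        Matrix (Fin 4) (Fin 4) ℚ) = X^4 - 6*X^3 - 6*X^2 - 6*X + 1 := by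
  have h : Matrix.charmatrix (!![5, 5, 5, 4; 2, 1, 1, 2; 0, 1, 0, 0; 0, 0, 1/2, 0] :
      Matrix (Fin 4) (Fin 4) ℚ) =
      !![X - C 5, -C 5, -C 5, -C 4; -C 2, X - C 1, -C 1, -C 2;
         0, -C 1, X, 0; 0, 0, -C (1/2), X] := by
    ext i j
    fin_cases i <;> fin_cases j <;>
      simp [Matrix.charmatrix_apply, Matrix.one_apply, Matrix.vecHead, Matrix.vecTail]
  rw [Matrix.charpoly, h]
  simp [Matrix.det_succ_row_zero, Fin.sum_univ_succ, Fin.succAbove, Fin.castSucc, Fin.castAdd, Fin.castLE, Fin.succ]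
  norm_num [← C_mul]
  simp only [map_ofNat]
  ring

/-- The characteristic polynomial of the matrix `M̃` (Cannon's matrix for `Γ₂` with the
last row divided by `2`) has a real root strictly between `6.97` and `6.99`. -/
theorem stmt_7 :
    ∃ x : ℝ, 6.97 < x ∧ x < 6.99 ∧
      Polynomial.aeval x
        (Matrix.charpoly (!![5, 5, 5, 4; 2, 1, 1, 2; 0, 1, 0, 0; 0, 0, 1/2, 0] :
          Matrix (Fin 4) (Fin 4) ℚ)) = 0 := by
  have key : ∀ x : ℝ, Polynomial.aeval x
      (Matrix.charpoly (!![5, 5, 5, 4; 2, 1, 1, 2; 0, 1, 0, 0; 0, 0, 1/2, 0] :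
        Matrix (Fin 4) (Fin 4) ℚ)) = x^4 - 6*x^3 - 6*x^2 - 6*x + 1 := by
    intro x
    rw [charpoly_eq]
    simp [map_ofNat]
  have hc : Continuous fun x : ℝ => x^4 - 6*x^3 - 6*x^2 - 6*x + 1 := by continuity
  have h1 : ((6.97:ℝ)^4 - 6*6.97^3 - 6*6.97^2 - 6*6.97 + 1) < 0 := by norm_num
  have h2 : (0:ℝ) < (6.99^4 - 6*6.99^3 - 6*6.99^2 - 6*6.99 + 1) := by norm_num
  have := intermediate_value_Ioo (le_of_lt (by norm_num : (6.97:ℝ) < 6.99))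
    hc.continuousOn (a := 6.97) (b := 6.99)
  obtain ⟨x, hx, hx0⟩ := this ⟨h1, h2⟩
  exact ⟨x, hx.1, hx.2, by rw [key]; exact hx0⟩
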